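/- (Positive definiteness of the modified Hessian in the hard case.) Let M ∈ ℝ^{n×n} be symmetric positive semidefinite, B ∈ ℝ^{n×n} symmetric positive definite, and let V = [v₁,...,v_r] ∈ ℝ^{n×r} be a basis of the nullspace N(M) of M satisfying VᵀBV = I_r. Then for any σ > 0, the matrix H = M + σ Σᵢ B vᵢ vᵢᵀ B is positive definite. -/

import Mathlib

open Matrix

theorem stmt_6 {n r : ℕ}
    (M B : Matrix (Fin n) (Fin n) ℝ) (hM : M.PosSemidef) (hB : B.PosDef)
    (V : Fin r → (Fin n → ℝ))
    (hVorth : ∀ i j, V i ⬝ᵥ B.mulVec (V j) = if i = j then (1 : ℝ) else 0)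
    (hVnull : ∀ x : Fin n → ℝ, M.mulVec x = 0 ↔ x ∈ Submodule.span ℝ (Set.range V))
    (σ : ℝ) (hσ : 0 < σ) :
    (M + σ • ∑ i, Matrix.vecMulVec (B.mulVec (V i)) (B.mulVec (V i))).PosDef := by
  have hS : (∑ i, Matrix.vecMulVec (B.mulVec (V i)) (B.mulVec (V i))).IsHermitian := by
    ext a b
    simp [conjTranspose_apply, Matrix.sum_apply, vecMulVec_apply, mul_comm]
  refine posDef_iff_dotProduct_mulVec.mpr ⟨?_, ?_⟩
  · refine hM.1.add ?_
    unfold Matrix.IsHermitian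
    rw [conjTranspose_smul, hS.eq]
    simp
  · intro x hx
    have hquad : ∀ y : Fin n → ℝ,
        y ⬝ᵥ (∑ i : Fin r, vecMulVec (B *ᵥ V i) (B *ᵥ V i)) *ᵥ y
          = ∑ i, (B *ᵥ V i ⬝ᵥ y) ^ 2 := by
      intro y
      have h1 : (∑ i : Fin r, vecMulVec (B *ᵥ V i) (B *ᵥ V i)) *ᵥ y
          = ∑ i : Fin r, (vecMulVec (B *ᵥ V i) (B *ᵥ V i)) *ᵥ y := by
        ext j
        simp only [mulVec, dotProduct, Matrix.sum_apply, Finset.sum_apply, Finset.sum_mul]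
        rw [Finset.sum_comm]
      have h2 : ∀ (v : Fin r → Fin n → ℝ), y ⬝ᵥ ∑ i, v i = ∑ i, y ⬝ᵥ v i := by
        intro v
        simp only [dotProduct, Finset.sum_apply, Finset.mul_sum]
        rw [Finset.sum_comm]
      rw [h1, h2]
      refine Finset.sum_congr rfl fun i _ => ?_
      simp only [mulVec, dotProduct, vecMulVec_apply, sq]
      have h3 : ∀ x1, ∑ x2, ((∑ k, B x1 k * V i k) * (∑ k, B x2 k * V i k)) * y x2
          = (∑ k, B x1 k * V i k) * ∑ x2, (∑ k, B x2 k * V i k) * y x2 := by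
        intro x1; rw [Finset.mul_sum]; exact Finset.sum_congr rfl fun j _ => by ring
      simp_rw [h3]
      rw [Finset.sum_mul]
      exact Finset.sum_congr rfl fun j _ => by ring
    have hexp : x ⬝ᵥ (M + σ • ∑ i, Matrix.vecMulVec (B.mulVec (V i)) (B.mulVec (V i))) *ᵥ x
        = x ⬝ᵥ M *ᵥ x + σ * ∑ i, (B *ᵥ V i ⬝ᵥ x) ^ 2 := by
      rw [add_mulVec, dotProduct_add, smul_mulVec, dotProduct_smul, smul_eq_mul, hquad]
    have hM0 : 0 ≤ x ⬝ᵥ M *ᵥ x := by simpa using hM.dotProduct_mulVec_nonneg x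
    have hsum0 : 0 ≤ ∑ i, (B *ᵥ V i ⬝ᵥ x) ^ 2 :=
      Finset.sum_nonneg fun i _ => sq_nonneg _
    have key : x ⬝ᵥ M *ᵥ x = 0 → (∑ i, (B *ᵥ V i ⬝ᵥ x) ^ 2) ≠ 0 := by
      intro hq hs
      have hMx : M *ᵥ x = 0 := by
        have h := (hM.dotProduct_mulVec_zero_iff x)
        simp only [star_trivial] at h
        exact h.mp hq
      obtain ⟨c, hc⟩ := (Submodule.mem_span_range_iff_exists_fun ℝ).mp ((hVnull x).mp hMx)
      have hterm : ∀ i, B *ᵥ V i ⬝ᵥ x = 0 := by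
        intro i
        have h := (Finset.sum_eq_zero_iff_of_nonneg
          (fun i _ => sq_nonneg (B *ᵥ V i ⬝ᵥ x))).mp hs i (Finset.mem_univ i)
        exact pow_eq_zero_iff two_ne_zero |>.mp h
      have hc0 : ∀ j, c j = 0 := by
        intro j
        have h := hterm j
        rw [← hc, dotProduct_comm] at h
        rw [show (∑ i : Fin r, c i • V i) ⬝ᵥ B *ᵥ V j = ∑ i : Fin r, c i * (V i ⬝ᵥ B *ᵥ V j)
          from by simp [dotProduct, Finset.sum_apply, Finset.sum_mul, Finset.mul_sum, mul_assoc];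
                  rw [Finset.sum_comm]] at h
        simpa [hVorth] using h
      apply hx
      rw [← hc]
      simp [hc0]
    rcases lt_or_eq_of_le hM0 with h | h
    · have : (0:ℝ) ≤ σ * ∑ i, (B *ᵥ V i ⬝ᵥ x) ^ 2 := mul_nonneg hσ.le hsum0
      simpa [hexp] using add_pos_of_pos_of_nonneg h this
    · have hsumpos : 0 < ∑ i, (B *ᵥ V i ⬝ᵥ x) ^ 2 :=
        lt_of_le_of_ne hsum0 (Ne.symm (key h.symm))
      simpa [hexp] using add_pos_of_nonneg_of_pos hM0 (mul_pos hσ hsumpos)
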